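/- Let B = ℂ[x₁, x₂, x₃, …] be the polynomial ring over ℂ in countably many variables. Suppose W is a ℂ-linear subspace of B that is invariant under the partial derivative operator ∂/∂x_n for every n ≥ 1 and under the multiplication operator p ↦ x_n · p for every n ≥ 1. If W ≠ {0}, then W = B. (Equivalently: the Fock representation of the Heisenberg algebra on B with ℏ ≠ 0 is irreducible.) -/

import Mathlib

open MvPolynomial Finsupp

lemma coeff_pderiv (n : ℕ+) (p : MvPolynomial ℕ+ ℂ) (m : ℕ+ →₀ ℕ) :
    coeff m (pderiv n p) = (m n + 1 : ℂ) * coeff (m + Finsupp.single n 1) p := by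
  induction p using MvPolynomial.induction_on' with
  | monomial d a =>
    rw [pderiv_monomial, coeff_monomial, coeff_monomial]
    by_cases h : d = m + Finsupp.single n 1
    · subst h
      have h1 : m + Finsupp.single n 1 - Finsupp.single n 1 = m :=
        add_tsub_cancel_right _ _
      rw [if_pos h1, if_pos rfl, Finsupp.add_apply, Finsupp.single_eq_same]
      push_cast
      ring
    · rw [if_neg h, mul_zero]
      by_cases hd : d n = 0
      · have hds : d - Finsupp.single n 1 = d := by
          ext k
          rcases eq_or_ne k n with rfl | hk
          · simp [hd]
          · simp [Finsupp.single_apply, Ne.symm hk]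
        rw [hds]
        by_cases h2 : d = m
        · subst h2; simp [hd]
        · simp [h2]
      · have : d - Finsupp.single n 1 ≠ m := by
          intro he
          apply h
          ext k
          have hek := congrArg (fun f => f k) he
          rcases eq_or_ne k n with rfl | hk
          · simp [Finsupp.single_apply] at hek ⊢
            omega
          · simp [Finsupp.single_apply, Ne.symm hk] at hek ⊢
            omega
        simp [this]
  | add p q hp hq => simp [hp, hq, coeff_add, mul_add]

lemma pderiv_support_lemma (n : ℕ+) (p : MvPolynomial ℕ+ ℂ) (m : ℕ+ →₀ ℕ)
    (hm : coeff m (pderiv n p) ≠ 0) : coeff (m + Finsupp.single n 1) p ≠ 0 := by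
  rw [coeff_pderiv] at hm
  intro h
  rw [h, mul_zero] at hm
  exact hm rfl

lemma totalDegree_pderiv_lt (n : ℕ+) (p : MvPolynomial ℕ+ ℂ) (hp : 0 < p.totalDegree) :
    (pderiv n p).totalDegree < p.totalDegree := by
  rcases eq_or_ne (pderiv n p) 0 with h | h
  · simpa [h]
  rw [totalDegree]
  apply Finset.sup_lt_iff (by simpa using hp) |>.mpr
  intro m hm
  rw [MvPolynomial.mem_support_iff] at hm
  have h2 := pderiv_support_lemma n p m hm
  rw [← MvPolynomial.mem_support_iff] at h2
  have h3 := MvPolynomial.le_totalDegree h2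
  have h4 : (m + Finsupp.single n 1).sum (fun _ e => e) = (m.sum fun _ e => e) + 1 := by
    rw [Finsupp.sum_add_index (by simp) (by simp)]
    simp
  omega

lemma one_mem_of_mem (W : Submodule ℂ (MvPolynomial ℕ+ ℂ))
    (hderiv : ∀ (n : ℕ+) (p : MvPolynomial ℕ+ ℂ), p ∈ W → pderiv n p ∈ W) :
    ∀ (N : ℕ) (p : MvPolynomial ℕ+ ℂ), p.totalDegree ≤ N → p ∈ W → p ≠ 0 →
      (1 : MvPolynomial ℕ+ ℂ) ∈ W := by
  intro N
  induction N with
  | zero =>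
    intro p hdeg hpW hp0
    have h0 : p.totalDegree = 0 := Nat.le_zero.mp hdeg
    have hC : p = C (coeff 0 p) := by
      ext m
      rcases eq_or_ne m 0 with rfl | hm
      · simp
      · rw [coeff_C, if_neg (Ne.symm hm)]
        by_contra hc
        have := MvPolynomial.le_totalDegree (MvPolynomial.mem_support_iff.mpr hc)
        rw [h0, Nat.le_zero, Finsupp.sum] at this
        apply hm
        ext k
        rcases eq_or_ne (m k) 0 with h | h
        · simpa using h
        · exact absurd (Finset.sum_eq_zero_iff.mp this k (Finsupp.mem_support_iff.mpr h)) h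
    have hc0 : coeff 0 p ≠ 0 := fun h => hp0 (by rw [hC, h, map_zero])
    have : (coeff 0 p)⁻¹ • p ∈ W := W.smul_mem _ hpW
    have h1 : (coeff 0 p)⁻¹ • p = 1 := by
      nth_rewrite 2 [hC]
      rw [smul_eq_C_mul, ← C_mul, inv_mul_cancel₀ hc0, C_1]
    rwa [h1] at this
  | succ N ih =>
    intro p hdeg hpW hp0
    rcases Nat.eq_zero_or_pos p.totalDegree with h0 | hpos
    · exact ih p (by omega) hpW hp0
    · -- find a top-degree monomial
      obtain ⟨d, hd, hdsum⟩ := Finset.exists_mem_eq_sup p.support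
        (by rwa [MvPolynomial.support_nonempty]) (fun s => s.sum fun _ e => e)
      have hdpos : 0 < d.sum (fun _ e => e) := by
        rw [totalDegree, hdsum] at hpos; exact hpos
      have : d.support.Nonempty := by
        by_contra h
        rw [Finset.not_nonempty_iff_eq_empty, Finsupp.support_eq_empty] at h
        simp [h, Finsupp.sum] at hdpos
      obtain ⟨n, hn⟩ := this
      have hdn : 0 < d n := Nat.pos_of_ne_zero (Finsupp.mem_support_iff.mp hn)
      have hle : Finsupp.single n 1 ≤ d := by
        rw [Finsupp.single_le_iff]; omega
      have hq0 : pderiv n p ≠ 0 := by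
        intro h
        have hc : coeff (d - Finsupp.single n 1) (pderiv n p) = 0 := by simp [h]
        rw [coeff_pderiv, tsub_add_cancel_of_le hle] at hc
        rcases mul_eq_zero.mp hc with h | h
        · exact Nat.cast_add_one_ne_zero _ h
        · exact MvPolynomial.mem_support_iff.mp hd h
      have hlt := totalDegree_pderiv_lt n p hpos
      exact ih (pderiv n p) (by omega) (hderiv n p hpW) hq0

/-- A nonzero subspace of `B = ℂ[x₁, x₂, …]` invariant under all partial
derivatives `∂/∂x_n` and all multiplication operators `p ↦ x_n p` is all of `B`
(irreducibility of the Fock representation of the Heisenberg algebra). -/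
theorem fock_representation_irreducible (W : Submodule ℂ (MvPolynomial ℕ+ ℂ))
    (hderiv : ∀ (n : ℕ+) (p : MvPolynomial ℕ+ ℂ), p ∈ W → pderiv n p ∈ W)
    (hmul : ∀ (n : ℕ+) (p : MvPolynomial ℕ+ ℂ), p ∈ W → X n * p ∈ W)
    (hW : W ≠ ⊥) : W = ⊤ := by
  obtain ⟨p₀, hp₀W, hp₀⟩ := Submodule.exists_mem_ne_zero_of_ne_bot hW
  have h1 : (1 : MvPolynomial ℕ+ ℂ) ∈ W :=
    one_mem_of_mem W hderiv p₀.totalDegree p₀ le_rfl hp₀W hp₀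
  rw [eq_top_iff]
  intro p hp'
  clear hp'
  induction p using MvPolynomial.induction_on with
  | C a =>
    have := W.smul_mem a h1
    rwa [smul_eq_C_mul, mul_one] at this
  | add p q hp hq => exact W.add_mem hp hq
  | mul_X p n hp =>
    have := hmul n p hp
    rwa [mul_comm] at this
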